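/- Let G = (V,E) be a finite simple graph, and on a finite-dimensional complex Hilbert space let operators X̃_v, Z̃_v (v ∈ V) be given such that Z̃_v² = I for all v and any two operators attached to distinct vertices commute. Let v, w ∈ V be adjacent, and let ψ be a vector with X̃_v ψ = ∏_{k∈n_v} Z̃_k ψ and X̃_w ψ = ∏_{k∈n_w} Z̃_k ψ. Then (X̃_w Z̃_w + Z̃_w X̃_w) ψ = ∏_{i∈C(v,w)} Z̃_i · (X̃_v Z̃_v + Z̃_v X̃_v) ψ, where C(v,w) = (n_v ∪ n_w) \ ({v,w} ∪ (n_v ∩ n_w)). -/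

import Mathlib

set_option linter.unusedSectionVars false

section aux
variable {V : Type} [DecidableEq V] {M : Type*} [Monoid M]
variable (Z : V → M) (hc : ∀ a b, Commute (Z a) (Z b))

noncomputable def Pz (S : Finset V) : M :=
  S.noncommProd Z (fun a _ b _ _ => hc a b)

lemma Pz_eq_list (S : Finset V) : Pz Z hc S = (S.toList.map Z).prod := by
  rw [← Finset.noncommProd_toFinset S.toList Z (fun a _ b _ _ => hc a b) S.nodup_toList]
  unfold Pz
  congr 1
  exact (Finset.toList_toFinset S).symm

lemma Pz_commute {y : M} {S : Finset V} (h : ∀ x ∈ S, Commute y (Z x)) :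
    Commute y (Pz Z hc S) :=
  Finset.noncommProd_commute _ _ _ _ h

lemma Pz_insert {a : V} {S : Finset V} (ha : a ∉ S) :
    Pz Z hc (insert a S) = Z a * Pz Z hc S := by
  unfold Pz; exact Finset.noncommProd_insert_of_notMem _ _ _ _ ha

lemma Pz_erase {a : V} {S : Finset V} (ha : a ∈ S) :
    Pz Z hc S = Z a * Pz Z hc (S.erase a) := by
  unfold Pz
  exact (Finset.mul_noncommProd_erase S ha Z (fun a _ b _ _ => hc a b)).symm

lemma Pz_single_mul (h2 : ∀ a, Z a * Z a = 1) (a : V) (S : Finset V) :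
    Z a * Pz Z hc S = Pz Z hc (symmDiff {a} S) := by
  by_cases h : a ∈ S
  · have he : symmDiff ({a} : Finset V) S = S.erase a := by
      ext k
      simp only [Finset.mem_symmDiff, Finset.mem_erase, Finset.mem_singleton]
      constructor
      · rintro (⟨rfl, hk⟩ | hk); · exact absurd h hk
        · exact ⟨hk.2, hk.1⟩
      · rintro ⟨hk, hk2⟩; exact Or.inr ⟨hk2, hk⟩
    rw [he]
    calc Z a * Pz Z hc S = Z a * (Z a * Pz Z hc (S.erase a)) := by
          rw [← Pz_erase Z hc h]
      _ = (Z a * Z a) * Pz Z hc (S.erase a) := by rw [mul_assoc]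
      _ = Pz Z hc (S.erase a) := by rw [h2, one_mul]
  · have he : symmDiff ({a} : Finset V) S = insert a S := by
      ext k
      simp only [Finset.mem_symmDiff, Finset.mem_insert, Finset.mem_singleton]
      constructor
      · rintro (⟨rfl, -⟩ | ⟨hk, -⟩); · exact Or.inl rfl
        · exact Or.inr hk
      · rintro (rfl | hk); · exact Or.inl ⟨rfl, h⟩
        · exact Or.inr ⟨hk, fun hh => h (hh ▸ hk)⟩
    rw [he, Pz_insert Z hc h]

lemma Pz_mul (h2 : ∀ a, Z a * Z a = 1) (A B : Finset V) :
    Pz Z hc A * Pz Z hc B = Pz Z hc (symmDiff A B) := by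
  induction A using Finset.induction with
  | empty =>
    have hb : symmDiff (∅ : Finset V) B = B := by
      rw [← Finset.bot_eq_empty, bot_symmDiff]
    rw [hb]
    unfold Pz
    exact (congrArg (· * _) (Finset.noncommProd_empty _ _)).trans (one_mul _)
  | @insert a A ha ih =>
    have h3 : (insert a A : Finset V) = symmDiff {a} A := by
      ext k
      simp only [Finset.mem_symmDiff, Finset.mem_insert, Finset.mem_singleton]
      constructor
      · rintro (rfl | hk); · exact Or.inl ⟨rfl, ha⟩
        · exact Or.inr ⟨hk, fun hh => ha (hh ▸ hk)⟩
      · rintro (⟨rfl, -⟩ | ⟨hk, -⟩); · exact Or.inl rfl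
        · exact Or.inr hk
    rw [Pz_insert Z hc ha, mul_assoc, ih, Pz_single_mul Z hc h2, h3, symmDiff_assoc]

lemma Pz_sq (h2 : ∀ a, Z a * Z a = 1) (A : Finset V) :
    Pz Z hc A * Pz Z hc A = 1 := by
  rw [Pz_mul Z hc h2, symmDiff_self, Finset.bot_eq_empty]
  unfold Pz
  exact Finset.noncommProd_empty _ _

end aux

lemma finset_factC {V : Type} [DecidableEq V] {nv nw : Finset V} {v w : V}
    (hne : v ≠ w) (hvnw : v ∈ nw) (hwnv : w ∈ nv) (hvnv : v ∉ nv) (hwnw : w ∉ nw) :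
    symmDiff (nv.erase w) (nw.erase v) = (nv ∪ nw) \ ({v, w} ∪ (nv ∩ nw)) := by
  ext k
  simp only [Finset.mem_symmDiff, Finset.mem_erase, Finset.mem_sdiff, Finset.mem_union,
    Finset.mem_inter, Finset.mem_insert, Finset.mem_singleton, not_or, not_and]
  by_cases hkv : k = v
  · subst hkv; simp [hvnv, hvnw, hne]
  · by_cases hkw : k = w
    · subst hkw; simp [hwnv, hwnw, hne, hkv]
    · simp [hkv, hkw]; tauto

lemma finset_fact2 {V : Type} [DecidableEq V] {nv nw : Finset V} {v w : V}
    (hne : v ≠ w) (hvnw : v ∈ nw) (hwnv : w ∈ nv) (hvnv : v ∉ nv) (hwnw : w ∉ nw) :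
    symmDiff ({w} : Finset V) nw
      = symmDiff ((nv ∪ nw) \ ({v, w} ∪ (nv ∩ nw))) (symmDiff {v} nv) := by
  ext k
  simp only [Finset.mem_symmDiff, Finset.mem_erase, Finset.mem_sdiff, Finset.mem_union,
    Finset.mem_inter, Finset.mem_insert, Finset.mem_singleton, not_or, not_and]
  by_cases hkv : k = v
  · subst hkv; simp [hvnv, hvnw, hne]
  · by_cases hkw : k = w
    · subst hkw; simp [hwnv, hwnw, hne, hkv]
    · simp [hkv, hkw]; tauto

noncomputable section

theorem anticommutator_edge_relation
    {V : Type} [Fintype V] [DecidableEq V]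
    (G : SimpleGraph V) [DecidableRel G.Adj]
    {H : Type} [NormedAddCommGroup H] [InnerProductSpace ℂ H]
    [FiniteDimensional ℂ H]
    (X Z : V → H →ₗ[ℂ] H)
    (hZ2 : ∀ v, Z v * Z v = 1)
    (hXX : ∀ u v, u ≠ v → Commute (X u) (X v))
    (hXZ : ∀ u v, u ≠ v → Commute (X u) (Z v))
    (hZZ : ∀ u v, u ≠ v → Commute (Z u) (Z v))
    (v w : V) (hvw : G.Adj v w)
    (ψ : H)
    (hv : (X v) ψ = (((G.neighborFinset v).toList.map Z).prod) ψ)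
    (hw : (X w) ψ = (((G.neighborFinset w).toList.map Z).prod) ψ) :
    (X w * Z w + Z w * X w) ψ
      = (((((G.neighborFinset v ∪ G.neighborFinset w) \
            ({v, w} ∪ (G.neighborFinset v ∩ G.neighborFinset w))).toList.map
              Z).prod) * (X v * Z v + Z v * X v)) ψ := by
  have hcz : ∀ a b, Commute (Z a) (Z b) := by
    intro a b
    by_cases h : a = b
    · subst h; exact Commute.refl _
    · exact hZZ a b h
  have hne : v ≠ w := hvw.ne
  have hvnw : v ∈ G.neighborFinset w := (SimpleGraph.mem_neighborFinset G w v).mpr hvw.symm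
  have hwnv : w ∈ G.neighborFinset v := (SimpleGraph.mem_neighborFinset G v w).mpr hvw
  have hvnv : v ∉ G.neighborFinset v := by simp [SimpleGraph.mem_neighborFinset]
  have hwnw : w ∉ G.neighborFinset w := by simp [SimpleGraph.mem_neighborFinset]
  have hv' : (X v) ψ = Pz Z hcz (G.neighborFinset v) ψ := by rw [Pz_eq_list]; exact hv
  have hw' : (X w) ψ = Pz Z hcz (G.neighborFinset w) ψ := by rw [Pz_eq_list]; exact hw
  have factC : symmDiff ((G.neighborFinset v).erase w) ((G.neighborFinset w).erase v)
      = (G.neighborFinset v ∪ G.neighborFinset w) \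
        ({v, w} ∪ (G.neighborFinset v ∩ G.neighborFinset w)) :=
    finset_factC hne hvnw hwnv hvnv hwnw
  have fact2 : symmDiff ({w} : Finset V) (G.neighborFinset w)
      = symmDiff ((G.neighborFinset v ∪ G.neighborFinset w) \
          ({v, w} ∪ (G.neighborFinset v ∩ G.neighborFinset w)))
          (symmDiff {v} (G.neighborFinset v)) :=
    finset_fact2 hne hvnw hwnv hvnv hwnw
  have hXvPew : Commute (X v) (Pz Z hcz ((G.neighborFinset w).erase v)) :=
    Pz_commute Z hcz (fun x hx => hXZ v x (Ne.symm (Finset.mem_erase.mp hx).1))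
  have hZvPew : Commute (Z v) (Pz Z hcz ((G.neighborFinset w).erase v)) :=
    Pz_commute Z hcz (fun x _ => hcz v x)
  have hXwPev : Commute (X w) (Pz Z hcz ((G.neighborFinset v).erase w)) :=
    Pz_commute Z hcz (fun x hx => hXZ w x (Ne.symm (Finset.mem_erase.mp hx).1))
  have hZwPev : Commute (Z w) (Pz Z hcz ((G.neighborFinset v).erase w)) :=
    Pz_commute Z hcz (fun x _ => hcz w x)
  have opA : X v * Pz Z hcz (G.neighborFinset w)
      = Pz Z hcz ((G.neighborFinset w).erase v) * (X v * Z v) := by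
    rw [Pz_erase Z hcz hvnw, ← mul_assoc]
    exact (hXvPew.mul_left hZvPew).eq
  have opB : X w * Pz Z hcz (G.neighborFinset v)
      = Pz Z hcz ((G.neighborFinset v).erase w) * (X w * Z w) := by
    rw [Pz_erase Z hcz hwnv, ← mul_assoc]
    exact (hXwPev.mul_left hZwPev).eq
  have eqAB : (Pz Z hcz ((G.neighborFinset w).erase v) * (X v * Z v)) ψ
      = (Pz Z hcz ((G.neighborFinset v).erase w) * (X w * Z w)) ψ := by
    calc (Pz Z hcz ((G.neighborFinset w).erase v) * (X v * Z v)) ψ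
        = (X v * Pz Z hcz (G.neighborFinset w)) ψ := by rw [opA]
      _ = (X v) ((Pz Z hcz (G.neighborFinset w)) ψ) := Module.End.mul_apply _ _ _
      _ = (X v) ((X w) ψ) := by rw [hw']
      _ = (X v * X w) ψ := (Module.End.mul_apply _ _ _).symm
      _ = (X w * X v) ψ := by rw [(hXX v w hne).eq]
      _ = (X w) ((X v) ψ) := Module.End.mul_apply _ _ _
      _ = (X w) ((Pz Z hcz (G.neighborFinset v)) ψ) := by rw [hv']
      _ = (X w * Pz Z hcz (G.neighborFinset v)) ψ := (Module.End.mul_apply _ _ _).symm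
      _ = (Pz Z hcz ((G.neighborFinset v).erase w) * (X w * Z w)) ψ := by rw [opB]
  have key1 : (X w * Z w) ψ
      = (Pz Z hcz ((G.neighborFinset v ∪ G.neighborFinset w) \
          ({v, w} ∪ (G.neighborFinset v ∩ G.neighborFinset w))) * (X v * Z v)) ψ := by
    have hsq : Pz Z hcz ((G.neighborFinset v).erase w)
        * Pz Z hcz ((G.neighborFinset v).erase w) = 1 := Pz_sq Z hcz hZ2 _
    calc (X w * Z w) ψ
        = ((Pz Z hcz ((G.neighborFinset v).erase w)
            * Pz Z hcz ((G.neighborFinset v).erase w)) * (X w * Z w)) ψ := by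
          rw [hsq, one_mul]
      _ = (Pz Z hcz ((G.neighborFinset v).erase w))
            ((Pz Z hcz ((G.neighborFinset v).erase w) * (X w * Z w)) ψ) := by
          rw [mul_assoc]; exact Module.End.mul_apply _ _ _
      _ = (Pz Z hcz ((G.neighborFinset v).erase w))
            ((Pz Z hcz ((G.neighborFinset w).erase v) * (X v * Z v)) ψ) := by rw [eqAB]
      _ = ((Pz Z hcz ((G.neighborFinset v).erase w)
            * Pz Z hcz ((G.neighborFinset w).erase v)) * (X v * Z v)) ψ := by
          rw [mul_assoc]; exact (Module.End.mul_apply _ _ _).symm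
      _ = (Pz Z hcz ((G.neighborFinset v ∪ G.neighborFinset w) \
            ({v, w} ∪ (G.neighborFinset v ∩ G.neighborFinset w))) * (X v * Z v)) ψ := by
          rw [Pz_mul Z hcz hZ2, factC]
  have key2 : (Z w * X w) ψ
      = (Pz Z hcz ((G.neighborFinset v ∪ G.neighborFinset w) \
          ({v, w} ∪ (G.neighborFinset v ∩ G.neighborFinset w))) * (Z v * X v)) ψ := by
    calc (Z w * X w) ψ = (Z w) ((X w) ψ) := Module.End.mul_apply _ _ _
      _ = (Z w) ((Pz Z hcz (G.neighborFinset w)) ψ) := by rw [hw']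
      _ = (Z w * Pz Z hcz (G.neighborFinset w)) ψ := (Module.End.mul_apply _ _ _).symm
      _ = (Pz Z hcz (symmDiff {w} (G.neighborFinset w))) ψ := by
          rw [Pz_single_mul Z hcz hZ2]
      _ = (Pz Z hcz (symmDiff ((G.neighborFinset v ∪ G.neighborFinset w) \
            ({v, w} ∪ (G.neighborFinset v ∩ G.neighborFinset w)))
            (symmDiff {v} (G.neighborFinset v)))) ψ := by rw [fact2]
      _ = ((Pz Z hcz ((G.neighborFinset v ∪ G.neighborFinset w) \
            ({v, w} ∪ (G.neighborFinset v ∩ G.neighborFinset w)))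
            * Pz Z hcz (symmDiff {v} (G.neighborFinset v)))) ψ := by
          rw [Pz_mul Z hcz hZ2]
      _ = ((Pz Z hcz ((G.neighborFinset v ∪ G.neighborFinset w) \
            ({v, w} ∪ (G.neighborFinset v ∩ G.neighborFinset w)))
            * (Z v * Pz Z hcz (G.neighborFinset v)))) ψ := by
          rw [Pz_single_mul Z hcz hZ2]
      _ = (Pz Z hcz ((G.neighborFinset v ∪ G.neighborFinset w) \
            ({v, w} ∪ (G.neighborFinset v ∩ G.neighborFinset w))))
            ((Z v) ((Pz Z hcz (G.neighborFinset v)) ψ)) := by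
          rw [Module.End.mul_apply, Module.End.mul_apply]
      _ = (Pz Z hcz ((G.neighborFinset v ∪ G.neighborFinset w) \
            ({v, w} ∪ (G.neighborFinset v ∩ G.neighborFinset w))))
            ((Z v) ((X v) ψ)) := by rw [hv']
      _ = (Pz Z hcz ((G.neighborFinset v ∪ G.neighborFinset w) \
            ({v, w} ∪ (G.neighborFinset v ∩ G.neighborFinset w))) * (Z v * X v)) ψ := by
          rw [Module.End.mul_apply, Module.End.mul_apply]
  rw [← Pz_eq_list Z hcz]
  simp only [LinearMap.add_apply, mul_add, key1, key2]

end
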